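/- arXiv:2507.01556 — 4 statements merged into one kernel-verified Lean document; each statement's English description precedes it below -/
import Mathlib

section
/- Let A be an n×n real matrix, B an n×m real matrix, C a p×n real matrix, Q a p×p real matrix, R an m×m real matrix, s ∈ ℝⁿ and r ∈ ℝᵐ. Define the stage cost φ(x,u) = |xᵀCᵀQCx + uᵀRu + sᵀx + rᵀu| and the value function V : ℝⁿ → [0,∞] by V(x) = inf over all input sequences u : ℕ → ℝᵐ of ∑_{k=0}^∞ φ(x_k, u_k), where x_0 = x and x_{k+1} = A x_k + B u_k. Suppose there exist an m×n real matrix K, a constant M > 0, and ρ ∈ (0,1) such that ‖(A + B K)^k x‖ ≤ M ρ^k ‖x‖ for all k ∈ ℕ and all x ∈ ℝⁿ. Then V(x) < ∞ for every x ∈ ℝⁿ. -/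
open scoped ENNReal Matrix RealInnerProductSpace

/-- The trajectory of the discrete-time linear system `x_{k+1} = A x_k + B u_k`
starting from `x0` under the input sequence `u`. -/
def traj {n m : ℕ} (A : Matrix (Fin n) (Fin n) ℝ) (B : Matrix (Fin n) (Fin m) ℝ)
    (x0 : Fin n → ℝ) (u : ℕ → Fin m → ℝ) : ℕ → Fin n → ℝ
  | 0 => x0
  | k + 1 => A.mulVec (traj A B x0 u k) + B.mulVec (u k)

/-- The Euclidean norm of a vector in `Fin n → ℝ`. -/
noncomputable def euclidVecNorm {n : ℕ} (x : Fin n → ℝ) : ℝ :=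
  ‖(EuclideanSpace.equiv (Fin n) ℝ).symm x‖

lemma enorm_nonneg' {n : ℕ} (x : Fin n → ℝ) : 0 ≤ euclidVecNorm x := norm_nonneg _

lemma dot_le {a : ℕ} (x y : Fin a → ℝ) : |x ⬝ᵥ y| ≤ euclidVecNorm x * euclidVecNorm y := by
  have h := abs_real_inner_le_norm ((EuclideanSpace.equiv (Fin a) ℝ).symm x)
      ((EuclideanSpace.equiv (Fin a) ℝ).symm y)
  have : (inner ℝ ((EuclideanSpace.equiv (Fin a) ℝ).symm x)
      ((EuclideanSpace.equiv (Fin a) ℝ).symm y) : ℝ) = x ⬝ᵥ y := by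
    simp [EuclideanSpace.inner_eq_star_dotProduct, dotProduct, mul_comm]
  rwa [this] at h

lemma mulVec_bound {a b : ℕ} (N : Matrix (Fin a) (Fin b) ℝ) :
    ∃ c : ℝ, 0 ≤ c ∧ ∀ x, euclidVecNorm (N.mulVec x) ≤ c * euclidVecNorm x := by
  let f := LinearMap.toContinuousLinearMap (Matrix.toEuclideanLin N)
  refine ⟨‖f‖, norm_nonneg _, fun x => ?_⟩
  have h := f.le_opNorm ((EuclideanSpace.equiv (Fin b) ℝ).symm x)
  have hf : f ((EuclideanSpace.equiv (Fin b) ℝ).symm x) =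
      (EuclideanSpace.equiv (Fin a) ℝ).symm (N.mulVec x) := rfl
  rw [hf] at h
  exact h

theorem value_function_finite {n m p : ℕ}
    (A : Matrix (Fin n) (Fin n) ℝ) (B : Matrix (Fin n) (Fin m) ℝ)
    (C : Matrix (Fin p) (Fin n) ℝ) (Q : Matrix (Fin p) (Fin p) ℝ)
    (R : Matrix (Fin m) (Fin m) ℝ) (s : Fin n → ℝ) (r : Fin m → ℝ)
    (φ : (Fin n → ℝ) → (Fin m → ℝ) → ℝ)
    (hφ : ∀ (x : Fin n → ℝ) (u : Fin m → ℝ),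
      φ x u = |x ⬝ᵥ (Cᵀ * Q * C).mulVec x + u ⬝ᵥ R.mulVec u + s ⬝ᵥ x + r ⬝ᵥ u|)
    (V : (Fin n → ℝ) → ℝ≥0∞)
    (hV : ∀ x : Fin n → ℝ,
      V x = ⨅ u : ℕ → Fin m → ℝ, ∑' k : ℕ, ENNReal.ofReal (φ (traj A B x u k) (u k)))
    (K : Matrix (Fin m) (Fin n) ℝ) (M : ℝ) (hM : 0 < M) (ρ : ℝ) (hρ0 : 0 < ρ) (hρ1 : ρ < 1)
    (hstab : ∀ (k : ℕ) (x : Fin n → ℝ),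
      euclidVecNorm (((A + B * K) ^ k).mulVec x) ≤ M * ρ ^ k * euclidVecNorm x) :
    ∀ x : Fin n → ℝ, V x < ∞ := by
  intro x
  rw [hV]
  -- feedback input
  set u : ℕ → Fin m → ℝ := fun k => K.mulVec (((A + B * K) ^ k).mulVec x) with hu
  have htraj : ∀ k, traj A B x u k = ((A + B * K) ^ k).mulVec x := by
    intro k
    induction k with
    | zero => simp [traj]
    | succ k ih =>
      show A.mulVec (traj A B x u k) + B.mulVec (u k) = _
      rw [ih, hu]
      simp only [Matrix.mulVec_mulVec]
      rw [← Matrix.add_mulVec]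
      rw [pow_succ', Matrix.add_mul, Matrix.mul_assoc]
  obtain ⟨cW, hcW0, hcW⟩ := mulVec_bound (Cᵀ * Q * C)
  obtain ⟨cR, hcR0, hcR⟩ := mulVec_bound R
  obtain ⟨cK, hcK0, hcK⟩ := mulVec_bound K
  set E : ℝ := M * euclidVecNorm x with hE
  have hE0 : 0 ≤ E := mul_nonneg hM.le (enorm_nonneg' x)
  set D : ℝ := cW * E ^ 2 + cR * (cK * E) ^ 2 + euclidVecNorm s * E + euclidVecNorm r * (cK * E) with hD
  clear_value E
  have hD0 : 0 ≤ D := by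
    rw [hD]
    have h1 := enorm_nonneg' s
    have h2 := enorm_nonneg' r
    have : (0:ℝ) ≤ cK * E := mul_nonneg hcK0 hE0
    nlinarith [sq_nonneg E, sq_nonneg (cK * E), mul_nonneg hcW0 (sq_nonneg E),
      mul_nonneg hcR0 (sq_nonneg (cK * E)), mul_nonneg h1 hE0, mul_nonneg h2 this]
  clear_value D
  have key : ∀ k : ℕ, φ (traj A B x u k) (u k) ≤ D * ρ ^ k := by
    intro k
    have hρk0 : (0:ℝ) ≤ ρ ^ k := by positivity
    have hρk1 : ρ ^ k ≤ 1 := pow_le_one₀ hρ0.le hρ1.le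
    set xk : Fin n → ℝ := ((A + B * K) ^ k).mulVec x with hxk
    have hx : euclidVecNorm xk ≤ E * ρ ^ k := by
      calc euclidVecNorm xk ≤ M * ρ ^ k * euclidVecNorm x := hstab k x
        _ = E * ρ ^ k := by rw [hE]; ring
    have hux : u k = K.mulVec xk := rfl
    have hub : euclidVecNorm (u k) ≤ cK * (E * ρ ^ k) := by
      rw [hux]
      calc euclidVecNorm (K.mulVec xk) ≤ cK * euclidVecNorm xk := hcK xk
        _ ≤ cK * (E * ρ ^ k) := by
            exact mul_le_mul_of_nonneg_left hx hcK0
    have ha0 : 0 ≤ euclidVecNorm xk := enorm_nonneg' _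
    have hb0 : 0 ≤ euclidVecNorm (u k) := enorm_nonneg' _
    rw [hφ, htraj k, ← hxk]
    have t1 : |xk ⬝ᵥ (Cᵀ * Q * C).mulVec xk| ≤ cW * E ^ 2 * ρ ^ k := by
      calc |xk ⬝ᵥ (Cᵀ * Q * C).mulVec xk| ≤ euclidVecNorm xk * euclidVecNorm ((Cᵀ * Q * C).mulVec xk) :=
            dot_le _ _
        _ ≤ euclidVecNorm xk * (cW * euclidVecNorm xk) :=
            mul_le_mul_of_nonneg_left (hcW xk) ha0
        _ ≤ cW * E ^ 2 * ρ ^ k := by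
            nlinarith [mul_le_mul hx hx ha0 (mul_nonneg hE0 hρk0),
              mul_nonneg (mul_nonneg hcW0 (mul_nonneg hE0 hE0))
                (mul_nonneg hρk0 (sub_nonneg.2 hρk1))]
    have t2 : |(u k) ⬝ᵥ R.mulVec (u k)| ≤ cR * (cK * E) ^ 2 * ρ ^ k := by
      calc |(u k) ⬝ᵥ R.mulVec (u k)| ≤ euclidVecNorm (u k) * euclidVecNorm (R.mulVec (u k)) := dot_le _ _
        _ ≤ euclidVecNorm (u k) * (cR * euclidVecNorm (u k)) :=
            mul_le_mul_of_nonneg_left (hcR _) hb0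
        _ ≤ cR * (cK * E) ^ 2 * ρ ^ k := by
            nlinarith [mul_le_mul hub hub hb0 (mul_nonneg hcK0 (mul_nonneg hE0 hρk0)),
              mul_nonneg (mul_nonneg hcR0 (mul_nonneg (mul_nonneg hcK0 hE0) (mul_nonneg hcK0 hE0)))
                (mul_nonneg hρk0 (sub_nonneg.2 hρk1))]
    have t3 : |s ⬝ᵥ xk| ≤ euclidVecNorm s * E * ρ ^ k := by
      calc |s ⬝ᵥ xk| ≤ euclidVecNorm s * euclidVecNorm xk := dot_le _ _
        _ ≤ euclidVecNorm s * (E * ρ ^ k) := mul_le_mul_of_nonneg_left hx (enorm_nonneg' s)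
        _ = euclidVecNorm s * E * ρ ^ k := (mul_assoc _ _ _).symm
    have t4 : |r ⬝ᵥ u k| ≤ euclidVecNorm r * (cK * E) * ρ ^ k := by
      calc |r ⬝ᵥ u k| ≤ euclidVecNorm r * euclidVecNorm (u k) := dot_le _ _
        _ ≤ euclidVecNorm r * (cK * (E * ρ ^ k)) := mul_le_mul_of_nonneg_left hub (enorm_nonneg' r)
        _ = euclidVecNorm r * (cK * E) * ρ ^ k := by ring
    calc |xk ⬝ᵥ (Cᵀ * Q * C).mulVec xk + (u k) ⬝ᵥ R.mulVec (u k) + s ⬝ᵥ xk + r ⬝ᵥ u k|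
        ≤ |xk ⬝ᵥ (Cᵀ * Q * C).mulVec xk| + |(u k) ⬝ᵥ R.mulVec (u k)| + |s ⬝ᵥ xk| + |r ⬝ᵥ u k| := by
          exact le_trans (abs_add_le _ _) (add_le_add_left (abs_add_three _ _ _) _)
      _ ≤ D * ρ ^ k := by rw [hD]; nlinarith [t1, t2, t3, t4]
  have hsum : (∑' k : ℕ, ENNReal.ofReal (φ (traj A B x u k) (u k))) < ∞ := by
    have h1 : (∑' k : ℕ, ENNReal.ofReal (φ (traj A B x u k) (u k)))
        ≤ ∑' k : ℕ, ENNReal.ofReal (D * ρ ^ k) :=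
      ENNReal.tsum_le_tsum fun k => ENNReal.ofReal_le_ofReal (key k)
    have h2 : (∑' k : ℕ, ENNReal.ofReal (D * ρ ^ k))
        = ENNReal.ofReal D * ∑' k : ℕ, (ENNReal.ofReal ρ) ^ k := by
      rw [ENNReal.tsum_mul_left.symm]
      congr 1 with k
      rw [ENNReal.ofReal_mul hD0, ENNReal.ofReal_pow hρ0.le]
    have h3 : (∑' k : ℕ, (ENNReal.ofReal ρ) ^ k) = (1 - ENNReal.ofReal ρ)⁻¹ :=
      ENNReal.tsum_geometric _
    have hρlt : ENNReal.ofReal ρ < 1 := by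
      rw [ENNReal.ofReal_lt_one]; exact hρ1
    have h4 : (1 - ENNReal.ofReal ρ)⁻¹ < ∞ := by
      rw [ENNReal.inv_lt_top]
      exact tsub_pos_of_lt hρlt
    calc (∑' k : ℕ, ENNReal.ofReal (φ (traj A B x u k) (u k)))
        ≤ ENNReal.ofReal D * (1 - ENNReal.ofReal ρ)⁻¹ := by rw [← h3, ← h2]; exact h1
      _ < ∞ := ENNReal.mul_lt_top ENNReal.ofReal_lt_top h4
  exact lt_of_le_of_lt (iInf_le _ u) hsum
end

section
/- For every x ∈ ℝ with |x| ≤ 1/2, the function f(u) = x² + u² + |x − u| + 5(2x + u)² + 3|2x + u| attains its global minimum over u ∈ ℝ at u = −2x, and the minimum value equals 5x² + 3|x|. Consequently the function V₁(x) = 5x² + 3|x| satisfies V₁(x) = min_{u ∈ ℝ} ( x² + u² + |x − u| + V₁(2x + u) ) for all |x| ≤ 1/2. -/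
theorem tracking_bellman_piece_one :
    ∀ x : ℝ, |x| ≤ 1 / 2 →
      (x ^ 2 + (-(2 * x)) ^ 2 + |x - -(2 * x)|
          + 5 * (2 * x + -(2 * x)) ^ 2 + 3 * |2 * x + -(2 * x)| = 5 * x ^ 2 + 3 * |x|) ∧
      IsLeast
        {y : ℝ | ∃ u : ℝ,
          y = x ^ 2 + u ^ 2 + |x - u| + 5 * (2 * x + u) ^ 2 + 3 * |2 * x + u|}
        (5 * x ^ 2 + 3 * |x|) := by
  intro x hx
  have h3 : |x - -(2 * x)| = 3 * |x| := by
    rw [show x - -(2 * x) = 3 * x by ring, abs_mul]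
    norm_num
  have heq : x ^ 2 + (-(2 * x)) ^ 2 + |x - -(2 * x)|
      + 5 * (2 * x + -(2 * x)) ^ 2 + 3 * |2 * x + -(2 * x)| = 5 * x ^ 2 + 3 * |x| := by
    rw [h3, show 2 * x + -(2 * x) = (0 : ℝ) by ring]
    simp
    ring
  refine ⟨heq, ⟨-(2 * x), heq.symm⟩, ?_⟩
  rintro y ⟨u, rfl⟩
  have habs : |x - u + (2 * x + u)| = 3 * |x| := by
    rw [show x - u + (2 * x + u) = 3 * x by ring, abs_mul]
    norm_num
  have h1 := abs_add_le (x - u) (2 * x + u)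
  rw [habs] at h1
  nlinarith [sq_abs (2 * x + u), abs_nonneg (2 * x + u), neg_abs_le (x * (2 * x + u)),
    le_abs_self (x * (2 * x + u)), abs_mul x (2 * x + u), abs_nonneg x,
    mul_le_mul_of_nonneg_right hx (abs_nonneg (2 * x + u))]
end

section
/- For every x ∈ ℝ with 1/2 ≤ x ≤ 2, the function f(u) = x² + u² + |x − u| + 5(2x + u)² + 3|2x + u| attains its global minimum over u ∈ ℝ at u = −(10x + 1)/6, the resulting next state 2x + u = (2x − 1)/6 lies in [0, 1/2], and the minimum value equals (26x² + 22x − 1)/6. Equivalently, with V₁(y) = 5y² + 3|y|, one has min_{u ∈ ℝ} ( x² + u² + |x − u| + V₁(2x + u) ) = (26x² + 22x − 1)/6 for all x ∈ [1/2, 2]. -/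
theorem tracking_bellman_piece_two :
    ∀ x : ℝ, 1 / 2 ≤ x → x ≤ 2 →
      (x ^ 2 + (-(10 * x + 1) / 6) ^ 2 + |x - -(10 * x + 1) / 6|
          + 5 * (2 * x + -(10 * x + 1) / 6) ^ 2 + 3 * |2 * x + -(10 * x + 1) / 6| =
        (26 * x ^ 2 + 22 * x - 1) / 6) ∧
      (∀ u : ℝ, (26 * x ^ 2 + 22 * x - 1) / 6 ≤
        x ^ 2 + u ^ 2 + |x - u| + 5 * (2 * x + u) ^ 2 + 3 * |2 * x + u|) ∧
      2 * x + -(10 * x + 1) / 6 = (2 * x - 1) / 6 ∧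
      0 ≤ (2 * x - 1) / 6 ∧ (2 * x - 1) / 6 ≤ 1 / 2 := by
  intro x hx1 hx2
  refine ⟨?_, ?_, by ring, by linarith, by linarith⟩
  · rw [abs_of_nonneg (by linarith), abs_of_nonneg (by linarith)]
    ring
  · intro u
    rcases abs_cases (x - u) with ⟨h1, _⟩ | ⟨h1, _⟩ <;>
      rcases abs_cases (2 * x + u) with ⟨h2, _⟩ | ⟨h2, _⟩ <;>
      rw [h1, h2] <;> nlinarith [sq_nonneg (6 * u + 10 * x + 1), sq_nonneg (6 * u + 10 * x - 5), sq_nonneg (6 * u + 10 * x + 7), sq_nonneg (u + 2 * x), sq_nonneg (x - u)]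
end

section
/- Consider the scalar system x_{k+1} = 2 x_k + u_k with initial state x_0 = x where |x| ≤ 1/2, and the control sequence u_0 = −2x, u_k = 0 for all k ≥ 1. Then x_k = 0 for all k ≥ 1, and the infinite-horizon cost ∑_{k=0}^∞ ( x_k² + u_k² + |x_k − u_k| ) converges and equals 5x² + 3|x|. -/
theorem tracking_value_attained_piece_one
    (x₀ : ℝ) (hx₀ : |x₀| ≤ 1 / 2)
    (x u : ℕ → ℝ)
    (hx0 : x 0 = x₀)
    (hxrec : ∀ k : ℕ, x (k + 1) = 2 * x k + u k)
    (hu0 : u 0 = -(2 * x₀))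
    (hu : ∀ k : ℕ, 1 ≤ k → u k = 0) :
    (∀ k : ℕ, 1 ≤ k → x k = 0) ∧
      HasSum (fun k : ℕ => (x k) ^ 2 + (u k) ^ 2 + |x k - u k|)
        (5 * x₀ ^ 2 + 3 * |x₀|) := by
  have hxz : ∀ k : ℕ, 1 ≤ k → x k = 0 := by
    intro k hk
    induction k with
    | zero => omega
    | succ n ih =>
      rcases Nat.eq_zero_or_pos n with h | h
      · subst h; rw [hxrec, hx0, hu0]; ring
      · rw [hxrec, ih h, hu n h]; ring
  refine ⟨hxz, ?_⟩
  have key : (fun k : ℕ => (x k) ^ 2 + (u k) ^ 2 + |x k - u k|)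
      = fun k : ℕ => if k = 0 then 5 * x₀ ^ 2 + 3 * |x₀| else 0 := by
    funext k
    rcases Nat.eq_zero_or_pos k with hk | hk
    · subst hk
      simp only [if_pos rfl, hx0, hu0]
      have : |x₀ - -(2 * x₀)| = 3 * |x₀| := by
        rw [show x₀ - -(2 * x₀) = 3 * x₀ by ring, abs_mul]
        norm_num
      rw [this]; simp; ring
    · rw [if_neg (by omega), hxz k hk, hu k hk]
      simp
  rw [key]
  exact hasSum_ite_eq 0 _
end
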